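/- Every extreme point (vertex) of the polytope D_k of k-limited traffic matrices is a k-sparse traffic matrix; i.e., vertices(D_k) ⊆ D'_k. -/

import Mathlib

/-- Node set of the `N × N` torus: `Z_N × Z_N` with coordinatewise addition mod `N`. -/
abbrev Vt (N : ℕ) := ZMod N × ZMod N

/-- The four link directions `{e1, e2, -e1, -e2}`. -/
def dirs (N : ℕ) : Finset (Vt N) :=
  {((1 : ZMod N), (0 : ZMod N)), (0, 1), (-1, 0), (0, -1)}

/-- Edge set of the directed torus graph: `(i, i+e)` for `i ∈ V`, `e ∈ A`. -/
def Edges (N : ℕ) : Set (Vt N × Vt N) := {p | ∃ e ∈ dirs N, p.2 = p.1 + e}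

/-- Index set of nonzero displacements `t ∈ V \ {0}`. -/
def tns (N : ℕ) [NeZero N] : Finset (Vt N) := Finset.univ.filter (· ≠ 0)

/-- Row (source) sum of a traffic matrix: `Σ_{t ≠ 0} d_{s,s+t}`. -/
def rowSum (N : ℕ) [NeZero N] (d : Vt N → Vt N → ℝ) (s : Vt N) : ℝ :=
  ∑ t ∈ tns N, d s t

/-- Column (sink) sum of a traffic matrix at node `s`: `Σ_{t ≠ 0} d_{s-t,s}`. -/
def colSum (N : ℕ) [NeZero N] (d : Vt N → Vt N → ℝ) (s : Vt N) : ℝ :=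
  ∑ t ∈ tns N, d (s - t) t

/-- Total traffic `Σ_{s,t} d_{s,s+t}`. -/
def totalSum (N : ℕ) [NeZero N] (d : Vt N → Vt N → ℝ) : ℝ :=
  ∑ s : Vt N, rowSum N d s

/-- `d` is a valid (hose-feasible) traffic matrix. -/
def IsTraffic (N : ℕ) [NeZero N] (d : Vt N → Vt N → ℝ) : Prop :=
  (∀ s t, 0 ≤ d s t) ∧ (∀ s, d s 0 = 0) ∧
  (∀ s, rowSum N d s ≤ 1) ∧ (∀ s, colSum N d s ≤ 1)

/-- `d` is `k`-limited: hose-feasible with total traffic at most `k`. -/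
def kLimited (N : ℕ) [NeZero N] (k : ℕ) (d : Vt N → Vt N → ℝ) : Prop :=
  IsTraffic N d ∧ totalSum N d ≤ (k : ℝ)

/-- `d` is `k`-sparse: hose-feasible with at most `k` sources and `k` sinks. -/
def kSparse (N : ℕ) [NeZero N] (k : ℕ) (d : Vt N → Vt N → ℝ) : Prop :=
  IsTraffic N d ∧
  {s : Vt N | ∃ t, t ≠ 0 ∧ d s t ≠ 0}.ncard ≤ k ∧
  {s : Vt N | ∃ t, t ≠ 0 ∧ d (s - t) t ≠ 0}.ncard ≤ k

/-- `f s t i e` is the fraction of traffic of pair `(s, s+t)` routed on link `(i, i+e)`.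
`f` is a valid routing policy: flow conservation and `0 ≤ f ≤ 1`. -/
def IsRouting (N : ℕ) [NeZero N] (f : Vt N → Vt N → Vt N → Vt N → ℝ) : Prop :=
  (∀ s t, t ≠ 0 → ∀ i : Vt N,
    (∑ e ∈ dirs N, f s t i e) - (∑ e ∈ dirs N, f s t (i + e) (-e)) =
      (if i = s then 1 else if i = s + t then -1 else 0)) ∧
  (∀ s t i e, 0 ≤ f s t i e ∧ f s t i e ≤ 1)

/-- Load on link `(i, i+e)` under routing `f` and traffic `d`. -/
def load (N : ℕ) [NeZero N] (f : Vt N → Vt N → Vt N → Vt N → ℝ)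
    (d : Vt N → Vt N → ℝ) (i e : Vt N) : ℝ :=
  ∑ s : Vt N, ∑ t ∈ tns N, d s t * f s t i e

/-- Maximum load on any link. -/
noncomputable def maxLoad (N : ℕ) [NeZero N] (f : Vt N → Vt N → Vt N → Vt N → ℝ)
    (d : Vt N → Vt N → ℝ) : ℝ :=
  sSup {x | ∃ i e, e ∈ dirs N ∧ x = load N f d i e}

/-- Optimal oblivious worst-case load over `k`-limited traffic. -/
noncomputable def thetaStar (N : ℕ) [NeZero N] (k : ℕ) : ℝ :=
  sInf {x | ∃ f, IsRouting N f ∧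
    x = sSup {y | ∃ d, kLimited N k d ∧ y = maxLoad N f d}}


section Aux
variable (N : ℕ) [NeZero N]

lemma mem_tns {t : Vt N} : t ∈ tns N ↔ t ≠ 0 := by simp [tns]

/-- single entry matrix -/
def single (r t0 : Vt N) : Vt N → Vt N → ℝ := fun s t => if s = r ∧ t = t0 then 1 else 0

lemma rowSum_single {r t0 : Vt N} (ht0 : t0 ≠ 0) (s : Vt N) :
    rowSum N (single N r t0) s = if s = r then 1 else 0 := by
  unfold rowSum single
  by_cases hs : s = r
  · subst hs; simp [Finset.sum_ite_eq', mem_tns, ht0]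
  · simp [hs]

lemma colSum_single {r t0 : Vt N} (ht0 : t0 ≠ 0) (s : Vt N) :
    colSum N (single N r t0) s = if s = r + t0 then 1 else 0 := by
  unfold colSum single
  by_cases hs : s = r + t0
  · subst hs
    rw [Finset.sum_eq_single t0]
    · simp [ht0]
    · intro b _ hb
      have : ¬(r + t0 - b = r ∧ b = t0) := fun h => hb h.2
      simp [this]
    · intro h; exact absurd (mem_tns N |>.2 ht0) h
  · rw [Finset.sum_eq_zero]; · simp [hs]
    intro b _
    have : ¬(s - b = r ∧ b = t0) := by
      rintro ⟨h1, rfl⟩; exact hs (by rw [← h1]; ring)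
    simp [this]

lemma rowSum_add (a b : Vt N → Vt N → ℝ) (s : Vt N) :
    rowSum N (fun s t => a s t + b s t) s = rowSum N a s + rowSum N b s := by
  simp [rowSum, Finset.sum_add_distrib]

lemma rowSum_sub (a b : Vt N → Vt N → ℝ) (s : Vt N) :
    rowSum N (fun s t => a s t - b s t) s = rowSum N a s - rowSum N b s := by
  simp [rowSum, Finset.sum_sub_distrib]

lemma colSum_add (a b : Vt N → Vt N → ℝ) (s : Vt N) :
    colSum N (fun s t => a s t + b s t) s = colSum N a s + colSum N b s := by
  simp [colSum, Finset.sum_add_distrib]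

lemma colSum_sub (a b : Vt N → Vt N → ℝ) (s : Vt N) :
    colSum N (fun s t => a s t - b s t) s = colSum N a s - colSum N b s := by
  simp [colSum, Finset.sum_sub_distrib]

lemma rowSum_smul (c : ℝ) (a : Vt N → Vt N → ℝ) (s : Vt N) :
    rowSum N (fun s t => c * a s t) s = c * rowSum N a s := by
  simp [rowSum, Finset.mul_sum]

lemma colSum_smul (c : ℝ) (a : Vt N → Vt N → ℝ) (s : Vt N) :
    colSum N (fun s t => c * a s t) s = c * colSum N a s := by
  simp [colSum, Finset.mul_sum]

/-- step relation on rows: share a column -/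
def dstep (d : Vt N → Vt N → ℝ) (r r' : Vt N) : Prop :=
  ∃ c, d r (c - r) ≠ 0 ∧ d r' (c - r') ≠ 0

/-- z for a path between two rows -/
lemma P1 (d : Vt N → Vt N → ℝ) (hd0 : ∀ s, d s 0 = 0) {r r' : Vt N}
    (h : Relation.ReflTransGen (dstep N d) r r') :
    ∃ z : Vt N → Vt N → ℝ, (∀ s t, z s t ≠ 0 → d s t ≠ 0) ∧
      (∀ s, rowSum N z s = (if s = r then 1 else 0) - (if s = r' then 1 else 0)) ∧
      (∀ s, colSum N z s = 0) := by
  induction h with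
  | refl => exact ⟨fun _ _ => 0, by simp, by simp [rowSum], by simp [colSum]⟩
  | @tail b c hab hbc ih =>
      obtain ⟨z, hz1, hz2, hz3⟩ := ih
      obtain ⟨w, hw1, hw2⟩ := hbc
      have hwb : w - b ≠ 0 := fun h => hw1 (by rw [h]; exact hd0 b)
      have hwc : w - c ≠ 0 := fun h => hw2 (by rw [h]; exact hd0 c)
      refine ⟨fun s t => z s t + (single N b (w - b) s t - single N c (w - c) s t),
        ?_, ?_, ?_⟩
      · intro s t hst
        by_contra h0
        have e1 : z s t = 0 := by
          by_contra h'; exact hz1 s t h' h0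
        have e2 : single N b (w - b) s t = 0 := by
          unfold single; rw [if_neg]; rintro ⟨rfl, rfl⟩; exact hw1 h0
        have e3 : single N c (w - c) s t = 0 := by
          unfold single; rw [if_neg]; rintro ⟨rfl, rfl⟩; exact hw2 h0
        exact hst (by simp [e1, e2, e3])
      · intro s
        rw [show (fun s t => z s t + (single N b (w-b) s t - single N c (w-c) s t))
            = (fun s t => z s t + ((fun s t => single N b (w-b) s t - single N c (w-c) s t) s t)) from rfl,
          rowSum_add, rowSum_sub, hz2, rowSum_single N hwb, rowSum_single N hwc]
        ring
      · intro s
        rw [show (fun s t => z s t + (single N b (w-b) s t - single N c (w-c) s t))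
            = (fun s t => z s t + ((fun s t => single N b (w-b) s t - single N c (w-c) s t) s t)) from rfl,
          colSum_add, colSum_sub, hz3, colSum_single N hwb, colSum_single N hwc]
        have : b + (w - b) = c + (w - c) := by ring
        rw [this]; ring

/-- z for a path from a row to a column -/
lemma P2 (d : Vt N → Vt N → ℝ) (hd0 : ∀ s, d s 0 = 0) {r b w : Vt N}
    (h : Relation.ReflTransGen (dstep N d) r b) (hedge : d b (w - b) ≠ 0) :
    ∃ z : Vt N → Vt N → ℝ, (∀ s t, z s t ≠ 0 → d s t ≠ 0) ∧
      (∀ s, rowSum N z s = (if s = r then 1 else 0)) ∧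
      (∀ s, colSum N z s = (if s = w then 1 else 0)) := by
  obtain ⟨z, hz1, hz2, hz3⟩ := P1 N d hd0 h
  have hwb : w - b ≠ 0 := fun h' => hedge (by rw [h']; exact hd0 b)
  refine ⟨fun s t => z s t + single N b (w - b) s t, ?_, ?_, ?_⟩
  · intro s t hst
    by_contra h0
    have e1 : z s t = 0 := by by_contra h'; exact hz1 s t h' h0
    have e2 : single N b (w - b) s t = 0 := by
      unfold single; rw [if_neg]; rintro ⟨rfl, rfl⟩; exact hedge h0
    exact hst (by simp [e1, e2])
  · intro s
    rw [rowSum_add, hz2, rowSum_single N hwb]; ring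
  · intro s
    rw [colSum_add, hz3, colSum_single N hwb]
    rw [show b + (w - b) = w from by ring]; ring

-- appended part: perturbation lemma (tested with context from a.lean)
lemma perturb (k : ℕ) (d : Vt N → Vt N → ℝ) (hd : kLimited N k d)
    (hvert : ∀ d₁ d₂ : Vt N → Vt N → ℝ, ∀ l : ℝ,
      kLimited N k d₁ → kLimited N k d₂ → 0 < l → l < 1 →
      (∀ s t, d s t = l * d₁ s t + (1 - l) * d₂ s t) → d₁ = d₂)
    (z : Vt N → Vt N → ℝ) (hz0 : z ≠ 0)
    (hz1 : ∀ s t, z s t ≠ 0 → d s t ≠ 0)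
    (hz2 : ∀ s, rowSum N d s = 1 → rowSum N z s = 0)
    (hz3 : ∀ s, colSum N d s = 1 → colSum N z s = 0)
    (hz4 : totalSum N z = 0) : False := by
  obtain ⟨⟨hpos, h0, hrow, hcol⟩, htot⟩ := hd
  have hne : (Finset.univ : Finset (Vt N × Vt N)).Nonempty := Finset.univ_nonempty
  have hneV : (Finset.univ : Finset (Vt N)).Nonempty := Finset.univ_nonempty
  set B : ℝ := 1 + ∑ p : Vt N × Vt N, |z p.1 p.2| with hBdef
  have hsumnn : (0:ℝ) ≤ ∑ p : Vt N × Vt N, |z p.1 p.2| :=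
    Finset.sum_nonneg fun _ _ => abs_nonneg _
  have hB1 : (1:ℝ) ≤ B := by rw [hBdef]; linarith
  have hzB : ∀ s t, |z s t| ≤ B - 1 := by
    intro s t
    have := Finset.single_le_sum (f := fun p : Vt N × Vt N => |z p.1 p.2|)
      (fun _ _ => abs_nonneg _) (Finset.mem_univ (s, t))
    simpa [hBdef] using this
  have hsum_le : ∀ (f : Vt N → Vt N), (∑ t ∈ tns N, |z (f t) t|) ≤ B - 1 := by
    intro f
    have h1 : (∑ t ∈ tns N, |z (f t) t|) ≤ ∑ t : Vt N, |z (f t) t| :=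
      Finset.sum_le_sum_of_subset_of_nonneg (Finset.subset_univ _)
        (fun _ _ _ => abs_nonneg _)
    have h2 : (∑ t : Vt N, |z (f t) t|) ≤ ∑ t : Vt N, ∑ s : Vt N, |z s t| :=
      Finset.sum_le_sum fun t _ =>
        Finset.single_le_sum (f := fun s => |z s t|) (fun _ _ => abs_nonneg _)
          (Finset.mem_univ (f t))
    have h3 : (∑ t : Vt N, ∑ s : Vt N, |z s t|) = ∑ p : Vt N × Vt N, |z p.1 p.2| := by
      rw [show (∑ p : Vt N × Vt N, |z p.1 p.2|) = ∑ a : Vt N, ∑ b : Vt N, |z a b| from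
        Fintype.sum_prod_type (fun p : Vt N × Vt N => |z p.1 p.2|)]
      exact Finset.sum_comm
    simp only [hBdef]; linarith
  have hrB : ∀ s, |rowSum N z s| ≤ B - 1 := by
    intro s
    calc |rowSum N z s| ≤ ∑ t ∈ tns N, |z s t| := Finset.abs_sum_le_sum_abs _ _
    _ ≤ B - 1 := hsum_le (fun _ => s)
  have hcB : ∀ s, |colSum N z s| ≤ B - 1 := by
    intro s
    calc |colSum N z s| ≤ ∑ t ∈ tns N, |z (s - t) t| := Finset.abs_sum_le_sum_abs _ _
    _ ≤ B - 1 := hsum_le (fun t => s - t)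
  -- the minimum slacks
  set δ₁ : ℝ := Finset.univ.inf' hne (fun p : Vt N × Vt N => if d p.1 p.2 = 0 then 1 else d p.1 p.2) with hδ₁
  set δ₂ : ℝ := Finset.univ.inf' hneV (fun s => if rowSum N d s = 1 then 1 else 1 - rowSum N d s) with hδ₂
  set δ₃ : ℝ := Finset.univ.inf' hneV (fun s => if colSum N d s = 1 then 1 else 1 - colSum N d s) with hδ₃
  have hδ₁pos : 0 < δ₁ := by
    rw [hδ₁, Finset.lt_inf'_iff]
    intro p _
    by_cases h : d p.1 p.2 = 0 <;> simp [h]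
    exact lt_of_le_of_ne (hpos p.1 p.2) (Ne.symm h)
  have hδ₂pos : 0 < δ₂ := by
    rw [hδ₂, Finset.lt_inf'_iff]
    intro s _
    by_cases h : rowSum N d s = 1 <;> simp [h]
    exact lt_of_le_of_ne (hrow s) h
  have hδ₃pos : 0 < δ₃ := by
    rw [hδ₃, Finset.lt_inf'_iff]
    intro s _
    by_cases h : colSum N d s = 1 <;> simp [h]
    exact lt_of_le_of_ne (hcol s) h
  set δ : ℝ := min δ₁ (min δ₂ δ₃) with hδ
  have hδpos : 0 < δ := lt_min hδ₁pos (lt_min hδ₂pos hδ₃pos)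
  set ε : ℝ := δ / B with hε
  have hεpos : 0 < ε := div_pos hδpos (by linarith)
  have hmain : ∀ w : ℝ, |w| ≤ B - 1 → |ε * w| ≤ δ := by
    intro w hw
    rw [abs_mul, abs_of_pos hεpos]
    calc ε * |w| ≤ ε * (B - 1) := by
          apply mul_le_mul_of_nonneg_left hw hεpos.le
    _ ≤ δ := by
          rw [hε, div_mul_eq_mul_div, div_le_iff₀ (by linarith : (0:ℝ) < B)]
          nlinarith [hδpos.le]
  have hδ1 : δ ≤ δ₁ := min_le_left _ _
  have hδ2 : δ ≤ δ₂ := le_trans (min_le_right _ _) (min_le_left _ _)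
  have hδ3 : δ ≤ δ₃ := le_trans (min_le_right _ _) (min_le_right _ _)
  have hδ₁le : ∀ s t, d s t ≠ 0 → δ ≤ d s t := by
    intro s t h
    have := Finset.inf'_le (f := fun p : Vt N × Vt N => if d p.1 p.2 = 0 then 1 else d p.1 p.2)
      (Finset.mem_univ (s, t))
    rw [if_neg h] at this
    exact le_trans hδ1 (by rwa [hδ₁])
  have hδ₂le : ∀ s, rowSum N d s ≠ 1 → δ ≤ 1 - rowSum N d s := by
    intro s h
    have := Finset.inf'_le (f := fun s => if rowSum N d s = 1 then 1 else 1 - rowSum N d s)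
      (Finset.mem_univ s)
    rw [if_neg h] at this
    exact le_trans hδ2 (by rwa [hδ₂])
  have hδ₃le : ∀ s, colSum N d s ≠ 1 → δ ≤ 1 - colSum N d s := by
    intro s h
    have := Finset.inf'_le (f := fun s => if colSum N d s = 1 then 1 else 1 - colSum N d s)
      (Finset.mem_univ s)
    rw [if_neg h] at this
    exact le_trans hδ3 (by rwa [hδ₃])
  -- feasibility of perturbations
  have feas : ∀ η : ℝ, |η| ≤ ε → kLimited N k (fun s t => d s t + η * z s t) := by
    intro η hη
    have hmain' : ∀ w : ℝ, |w| ≤ B - 1 → |η * w| ≤ δ := by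
      intro w hw
      calc |η * w| = |η| * |w| := abs_mul _ _
      _ ≤ ε * |w| := mul_le_mul_of_nonneg_right hη (abs_nonneg _)
      _ = |ε * w| := by rw [abs_mul, abs_of_pos hεpos]
      _ ≤ δ := hmain w hw
    refine ⟨⟨?_, ?_, ?_, ?_⟩, ?_⟩
    · intro s t
      show 0 ≤ d s t + η * z s t
      by_cases hz : z s t = 0
      · simpa [hz] using hpos s t
      · have hd : d s t ≠ 0 := hz1 s t hz
        have h1 : δ ≤ d s t := hδ₁le s t hd
        have h2 : |η * z s t| ≤ δ := hmain' _ (hzB s t)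
        have := neg_abs_le (η * z s t)
        linarith
    · intro s
      have hz : z s 0 = 0 := by
        by_contra h'; exact hz1 s 0 h' (h0 s)
      simp [hz, h0 s]
    · intro s
      rw [show (fun s t => d s t + η * z s t)
          = (fun s t => d s t + (fun s t => η * z s t) s t) from rfl,
        rowSum_add, rowSum_smul]
      by_cases h : rowSum N d s = 1
      · rw [h, hz2 s h]; simp
      · have h1 : δ ≤ 1 - rowSum N d s := hδ₂le s h
        have h2 : |η * rowSum N z s| ≤ δ := hmain' _ (hrB s)
        have := le_abs_self (η * rowSum N z s)
        linarith
    · intro s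
      rw [show (fun s t => d s t + η * z s t)
          = (fun s t => d s t + (fun s t => η * z s t) s t) from rfl,
        colSum_add, colSum_smul]
      by_cases h : colSum N d s = 1
      · rw [h, hz3 s h]; simp
      · have h1 : δ ≤ 1 - colSum N d s := hδ₃le s h
        have h2 : |η * colSum N z s| ≤ δ := hmain' _ (hcB s)
        have := le_abs_self (η * colSum N z s)
        linarith
    · have : totalSum N (fun s t => d s t + η * z s t)
          = totalSum N d + η * totalSum N z := by
        unfold totalSum
        rw [Finset.mul_sum, ← Finset.sum_add_distrib]
        apply Finset.sum_congr rfl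
        intro s _
        rw [show (fun s t => d s t + η * z s t)
            = (fun s t => d s t + (fun s t => η * z s t) s t) from rfl,
          rowSum_add, rowSum_smul]
      rw [this, hz4]
      simpa using htot
  have h1 := feas ε (by rw [abs_of_pos hεpos])
  have h2 := feas (-ε) (by rw [abs_neg, abs_of_pos hεpos])
  have heq := hvert _ _ (1/2) h1 h2 (by norm_num) (by norm_num)
    (fun s t => by ring)
  apply hz0
  funext s t
  have := congrFun (congrFun heq s) t
  have : ε * z s t = - (ε * z s t) := by linarith [this]
  have hz : ε * z s t = 0 := by linarith
  rcases mul_eq_zero.1 hz with h | h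
  · exact absurd h (ne_of_gt hεpos)
  · exact h

open Classical in
/-- if more than k nonzero rows, there are two distinct slack nonzero rows -/
lemma two_slack (k : ℕ) (d : Vt N → Vt N → ℝ) (hd : kLimited N k d)
    (h : k < {s : Vt N | ∃ t, t ≠ 0 ∧ d s t ≠ 0}.ncard) :
    ∃ r1 r2 : Vt N, r1 ≠ r2 ∧
      0 < rowSum N d r1 ∧ rowSum N d r1 < 1 ∧
      0 < rowSum N d r2 ∧ rowSum N d r2 < 1 := by
  obtain ⟨⟨hpos, h0, hrow, hcol⟩, htot⟩ := hd
  set F : Finset (Vt N) := Finset.univ.filter (fun s => ∃ t, t ≠ 0 ∧ d s t ≠ 0) with hF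
  have hset : {s : Vt N | ∃ t, t ≠ 0 ∧ d s t ≠ 0} = ↑F := by
    ext s; simp [hF]
  rw [hset, Set.ncard_coe_finset] at h
  have hFpos : ∀ s ∈ F, 0 < rowSum N d s := by
    intro s hs
    rw [hF, Finset.mem_filter] at hs
    obtain ⟨-, t, ht, hdst⟩ := hs
    have : 0 < d s t := lt_of_le_of_ne (hpos s t) (Ne.symm hdst)
    calc (0:ℝ) < d s t := this
    _ ≤ rowSum N d s := Finset.single_le_sum (f := fun t => d s t)
        (fun t _ => hpos s t) ((mem_tns N).2 ht)
  set T : Finset (Vt N) := F.filter (fun s => rowSum N d s = 1) with hT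
  set Sl : Finset (Vt N) := F.filter (fun s => ¬ rowSum N d s = 1) with hSl
  have hcard : T.card + Sl.card = F.card := Finset.card_filter_add_card_filter_not _
  have hTtot : (T.card : ℝ) ≤ totalSum N d := by
    have h1 : ∑ s ∈ T, rowSum N d s = T.card := by
      rw [Finset.sum_congr rfl (fun s hs => (Finset.mem_filter.1 hs).2)]
      simp; rfl
    calc (T.card : ℝ) = ∑ s ∈ T, rowSum N d s := h1.symm
    _ ≤ ∑ s : Vt N, rowSum N d s := Finset.sum_le_sum_of_subset_of_nonneg
        (Finset.subset_univ _)
        (fun s _ _ => Finset.sum_nonneg (fun t _ => hpos s t))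
    _ = totalSum N d := rfl
  have hSl2 : 2 ≤ Sl.card := by
    by_contra hc
    push_neg at hc
    interval_cases hSlcard : Sl.card
    · -- Sl empty: T.card = F.card > k
      have : F.card = T.card := by omega
      have hk : (k:ℝ) + 1 ≤ (T.card : ℝ) := by
        have : k + 1 ≤ T.card := by omega
        exact_mod_cast this
      linarith
    · -- Sl has one element, with positive rowSum
      obtain ⟨s0, hs0⟩ := Finset.card_eq_one.1 hSlcard
      have hs0F : s0 ∈ F := by
        have : s0 ∈ Sl := by rw [hs0]; exact Finset.mem_singleton_self s0
        exact Finset.mem_of_mem_filter _ this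
      have hpos0 : 0 < rowSum N d s0 := hFpos s0 hs0F
      have hsum : ∑ s ∈ Sl, rowSum N d s = rowSum N d s0 := by
        rw [hs0, Finset.sum_singleton]
      have hFsum : ∑ s ∈ F, rowSum N d s = T.card + rowSum N d s0 := by
        have hdisj : Disjoint T Sl := Finset.disjoint_filter_filter_not F F _
        have : T ∪ Sl = F := Finset.filter_union_filter_not_eq (p := _) F
        rw [← this, Finset.sum_union hdisj, hsum]
        congr 1
        rw [Finset.sum_congr rfl (fun s hs => (Finset.mem_filter.1 hs).2)]
        simp; rfl
      have hk : (k:ℝ) ≤ (T.card : ℝ) := by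
        have : k ≤ T.card := by omega
        exact_mod_cast this
      have : ∑ s ∈ F, rowSum N d s ≤ totalSum N d :=
        Finset.sum_le_sum_of_subset_of_nonneg (Finset.subset_univ _)
          (fun s _ _ => Finset.sum_nonneg (fun t _ => hpos s t))
      linarith
  obtain ⟨r1, hr1, r2, hr2, hne⟩ := Finset.one_lt_card.1 (by omega : 1 < Sl.card)
  have p1 := Finset.mem_filter.1 hr1
  have p2 := Finset.mem_filter.1 hr2
  exact ⟨r1, r2, hne, hFpos r1 p1.1, lt_of_le_of_ne (hrow r1) p1.2,
    hFpos r2 p2.1, lt_of_le_of_ne (hrow r2) p2.2⟩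
open Classical in
/-- if every row reachable from a strictly-slack row r1 is tight (except r1),
and every column touched by the reachable set is tight, contradiction. -/
lemma comp_lemma (d : Vt N → Vt N → ℝ) (hd0 : ∀ s, d s 0 = 0)
    {r1 : Vt N} (hpos : 0 < rowSum N d r1) (hlt : rowSum N d r1 < 1)
    (htR : ∀ r, Relation.ReflTransGen (dstep N d) r1 r → r ≠ r1 → rowSum N d r = 1)
    (htC : ∀ c b, Relation.ReflTransGen (dstep N d) r1 b → d b (c - b) ≠ 0 →
      colSum N d c = 1) : False := by
  set X : Finset (Vt N) :=
    Finset.univ.filter (fun r => Relation.ReflTransGen (dstep N d) r1 r) with hX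
  set CX : Finset (Vt N) :=
    Finset.univ.filter (fun c => ∃ b ∈ X, d b (c - b) ≠ 0) with hCX
  have hmemX : ∀ r : Vt N, r ∈ X ↔ Relation.ReflTransGen (dstep N d) r1 r := by
    intro r; rw [hX, Finset.mem_filter]; simp
  have hmemCX : ∀ c : Vt N, c ∈ CX ↔ ∃ b ∈ X, d b (c - b) ≠ 0 := by
    intro c; rw [hCX, Finset.mem_filter]; simp
  have hr1X : r1 ∈ X := (hmemX r1).2 Relation.ReflTransGen.refl
  -- key exchange identity
  have key : ∑ r ∈ X, rowSum N d r = ∑ c ∈ CX, colSum N d c := by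
    unfold rowSum colSum
    rw [Finset.sum_comm (s := X) (t := tns N), Finset.sum_comm (s := CX) (t := tns N)]
    apply Finset.sum_congr rfl
    intro t ht
    have htne : t ≠ 0 := (mem_tns N).1 ht
    have lhs : ∑ r ∈ X, d r t = ∑ r : Vt N, if r ∈ X then d r t else 0 := by
      rw [hX, Finset.sum_filter]
      apply Finset.sum_congr rfl
      intro r _
      by_cases h : r ∈ X
      · rw [if_pos ((hmemX r).1 h), if_pos h]
      · rw [if_neg (fun hh => h ((hmemX r).2 hh)), if_neg h]
    have rhs : ∑ c ∈ CX, d (c - t) t = ∑ c : Vt N, if c ∈ CX then d (c - t) t else 0 := by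
      rw [hCX, Finset.sum_filter]
      apply Finset.sum_congr rfl
      intro c _
      by_cases h : c ∈ CX
      · rw [if_pos ((hmemCX c).1 h), if_pos h]
      · rw [if_neg (fun hh => h ((hmemCX c).2 hh)), if_neg h]
    rw [lhs, rhs]
    rw [Fintype.sum_equiv (Equiv.addRight t)
      (fun r => if r ∈ X then d r t else 0)
      (fun c => if c ∈ CX then d (c - t) t else 0) ?_]
    intro r
    simp only [Equiv.coe_addRight, add_sub_cancel_right]
    by_cases hzero : d r t = 0
    · by_cases h1 : r ∈ X <;> by_cases h2 : r + t ∈ CX <;>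
        simp [h1, h2, hzero]
    · have hiff : r ∈ X ↔ r + t ∈ CX := by
        constructor
        · intro h
          refine (hmemCX _).2 ⟨r, h, ?_⟩
          rwa [add_sub_cancel_left]
        · intro h
          obtain ⟨b, hbX, hbne⟩ := (hmemCX _).1 h
          refine (hmemX r).2 (Relation.ReflTransGen.tail ((hmemX b).1 hbX) ?_)
          exact ⟨r + t, hbne, by rwa [add_sub_cancel_left]⟩
      by_cases h1 : r ∈ X
      · rw [if_pos h1, if_pos (hiff.1 h1)]
      · rw [if_neg h1, if_neg (fun hh => h1 (hiff.2 hh))]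
  -- evaluate both sides
  have hrows : ∑ r ∈ X, rowSum N d r = rowSum N d r1 + ((X.card - 1 : ℕ) : ℝ) := by
    rw [← Finset.add_sum_erase X _ hr1X]
    congr 1
    rw [Finset.sum_congr rfl (fun r hr => htR r
      ((hmemX r).1 (Finset.mem_of_mem_erase hr)) (Finset.ne_of_mem_erase hr))]
    rw [Finset.sum_const, Finset.card_erase_of_mem hr1X]
    simp
  have hcols : ∑ c ∈ CX, colSum N d c = (CX.card : ℝ) := by
    rw [Finset.sum_congr rfl (fun c hc => by
      obtain ⟨b, hbX, hbne⟩ := (hmemCX c).1 hc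
      exact htC c b ((hmemX b).1 hbX) hbne)]
    simp
  have hn : 1 ≤ X.card := Finset.card_pos.2 ⟨r1, hr1X⟩
  have hcast : ((X.card - 1 : ℕ) : ℝ) = (X.card : ℝ) - 1 := by
    rw [Nat.cast_sub hn]; simp
  rw [hrows, hcols, hcast] at key
  have h1 : (CX.card : ℝ) < (X.card : ℝ) := by linarith
  have h2 : (X.card : ℝ) < (CX.card : ℝ) + 1 := by linarith
  have h1' : CX.card < X.card := by exact_mod_cast h1
  have h2' : X.card < CX.card + 1 := by exact_mod_cast h2
  omega
lemma rows_bound (k : ℕ) (d : Vt N → Vt N → ℝ) (hd : kLimited N k d)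
    (hvert : ∀ d₁ d₂ : Vt N → Vt N → ℝ, ∀ l : ℝ,
      kLimited N k d₁ → kLimited N k d₂ → 0 < l → l < 1 →
      (∀ s t, d s t = l * d₁ s t + (1 - l) * d₂ s t) → d₁ = d₂) :
    {s : Vt N | ∃ t, t ≠ 0 ∧ d s t ≠ 0}.ncard ≤ k := by
  by_contra hcon
  push_neg at hcon
  obtain ⟨r1, r2, hne, hp1, hl1, hp2, hl2⟩ := two_slack N k d hd hcon
  have hd0 : ∀ s, d s 0 = 0 := hd.1.2.1
  by_cases hA : ∃ r r', rowSum N d r ≠ 1 ∧ rowSum N d r' ≠ 1 ∧ r ≠ r' ∧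
      Relation.ReflTransGen (dstep N d) r r'
  · obtain ⟨r, r', hr, hr', hrne, hreach⟩ := hA
    obtain ⟨z, hz1, hz2, hz3⟩ := P1 N d hd0 hreach
    have hzr : rowSum N z r = 1 := by rw [hz2 r, if_pos rfl, if_neg hrne]; ring
    refine perturb N k d hd hvert z ?_ hz1 ?_ ?_ ?_
    · intro h0; rw [h0] at hzr; simp [rowSum] at hzr
    · intro s hs
      have h1 : s ≠ r := fun h => hr (h ▸ hs)
      have h2 : s ≠ r' := fun h => hr' (h ▸ hs)
      rw [hz2 s, if_neg h1, if_neg h2]; ring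
    · intro s _; exact hz3 s
    · unfold totalSum
      rw [Finset.sum_congr rfl (fun s _ => hz2 s), Finset.sum_sub_distrib]
      simp [Finset.sum_ite_eq']
  · push_neg at hA
    have htR : ∀ i : Vt N, rowSum N d i ≠ 1 →
        ∀ r, Relation.ReflTransGen (dstep N d) i r → r ≠ i → rowSum N d r = 1 := by
      intro i hi r hreach hri
      by_contra hr
      exact hA i r hi hr (Ne.symm hri) hreach
    have hex : ∀ i : Vt N, 0 < rowSum N d i → rowSum N d i ≠ 1 →
        ∃ c b, Relation.ReflTransGen (dstep N d) i b ∧ d b (c - b) ≠ 0 ∧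
          colSum N d c ≠ 1 := by
      intro i hip hine
      by_contra hc
      push_neg at hc
      exact comp_lemma N d hd0 hip (lt_of_le_of_ne (hd.1.2.2.1 i) hine) (htR i hine)
        (fun c b h1 h2 => hc c b h1 h2)
    obtain ⟨c1, b1, hreach1, hedge1, hcol1⟩ := hex r1 hp1 (ne_of_lt hl1)
    obtain ⟨c2, b2, hreach2, hedge2, hcol2⟩ := hex r2 hp2 (ne_of_lt hl2)
    obtain ⟨z1, hz11, hz12, hz13⟩ := P2 N d hd0 hreach1 hedge1
    obtain ⟨z2, hz21, hz22, hz23⟩ := P2 N d hd0 hreach2 hedge2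
    set z : Vt N → Vt N → ℝ := fun s t => z1 s t - z2 s t with hz
    have hrowz : ∀ s, rowSum N z s = (if s = r1 then 1 else 0) - (if s = r2 then 1 else 0) := by
      intro s; rw [hz, rowSum_sub, hz12, hz22]
    have hcolz : ∀ s, colSum N z s = (if s = c1 then 1 else 0) - (if s = c2 then 1 else 0) := by
      intro s; rw [hz, colSum_sub, hz13, hz23]
    have hzr1 : rowSum N z r1 = 1 := by
      rw [hrowz r1, if_pos rfl, if_neg hne]; ring
    refine perturb N k d hd hvert z ?_ ?_ ?_ ?_ ?_
    · intro h0
      rw [h0] at hzr1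
      simp [rowSum] at hzr1
    · intro s t hst
      rw [hz] at hst
      simp only at hst
      by_cases h1 : z1 s t = 0
      · exact hz21 s t (by intro h2; apply hst; rw [h1, h2]; ring)
      · exact hz11 s t h1
    · intro s hs
      have h1 : s ≠ r1 := fun h => (ne_of_lt hl1) (h ▸ hs)
      have h2 : s ≠ r2 := fun h => (ne_of_lt hl2) (h ▸ hs)
      rw [hrowz s, if_neg h1, if_neg h2]; ring
    · intro s hs
      have h1 : s ≠ c1 := fun h => hcol1 (h ▸ hs)
      have h2 : s ≠ c2 := fun h => hcol2 (h ▸ hs)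
      rw [hcolz s, if_neg h1, if_neg h2]; ring
    · unfold totalSum
      rw [Finset.sum_congr rfl (fun s _ => hrowz s), Finset.sum_sub_distrib]
      simp [Finset.sum_ite_eq']
/-- transpose traffic matrix -/
def dT (d : Vt N → Vt N → ℝ) : Vt N → Vt N → ℝ := fun s t => d (s + t) (-t)

lemma rowSum_dT (d : Vt N → Vt N → ℝ) (s : Vt N) :
    rowSum N (dT N d) s = colSum N d s := by
  unfold rowSum colSum dT
  refine Finset.sum_equiv (Equiv.neg (Vt N)) ?_ ?_
  · intro t; simp [mem_tns]
  · intro t _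
    simp [sub_neg_eq_add]

lemma colSum_dT (d : Vt N → Vt N → ℝ) (s : Vt N) :
    colSum N (dT N d) s = rowSum N d s := by
  unfold rowSum colSum dT
  refine Finset.sum_equiv (Equiv.neg (Vt N)) ?_ ?_
  · intro t; simp [mem_tns]
  · intro t _
    simp [sub_add_cancel]

lemma sum_colSum (d : Vt N → Vt N → ℝ) :
    ∑ s : Vt N, colSum N d s = totalSum N d := by
  unfold totalSum rowSum colSum
  rw [Finset.sum_comm]
  rw [show (∑ t ∈ tns N, ∑ s : Vt N, d (s - t) t) = ∑ t ∈ tns N, ∑ s : Vt N, d s t from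
    Finset.sum_congr rfl fun t _ => Fintype.sum_equiv (Equiv.subRight t)
      (fun s => d (s - t) t) (fun s => d s t) (fun s => rfl)]
  rw [Finset.sum_comm]

lemma totalSum_dT (d : Vt N → Vt N → ℝ) : totalSum N (dT N d) = totalSum N d := by
  unfold totalSum
  rw [Finset.sum_congr rfl (fun s _ => rowSum_dT N d s)]
  exact sum_colSum N d

lemma kLimited_dT (k : ℕ) (d : Vt N → Vt N → ℝ) (hd : kLimited N k d) :
    kLimited N k (dT N d) := by
  obtain ⟨⟨hpos, h0, hrow, hcol⟩, htot⟩ := hd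
  refine ⟨⟨fun s t => hpos _ _, fun s => by simpa [dT] using h0 s,
    fun s => by rw [rowSum_dT]; exact hcol s,
    fun s => by rw [colSum_dT]; exact hrow s⟩, by rwa [totalSum_dT]⟩

lemma dT_invol (d : Vt N → Vt N → ℝ) : dT N (dT N d) = d := by
  funext s t
  simp [dT]
theorem stmt6' (k : ℕ) (d : Vt N → Vt N → ℝ)
    (hd : kLimited N k d)
    (hvert : ∀ d₁ d₂ : Vt N → Vt N → ℝ, ∀ l : ℝ,
      kLimited N k d₁ → kLimited N k d₂ → 0 < l → l < 1 →
      (∀ s t, d s t = l * d₁ s t + (1 - l) * d₂ s t) → d₁ = d₂) :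
    IsTraffic N d ∧
    {s : Vt N | ∃ t, t ≠ 0 ∧ d s t ≠ 0}.ncard ≤ k ∧
    {s : Vt N | ∃ t, t ≠ 0 ∧ d (s - t) t ≠ 0}.ncard ≤ k := by
  refine ⟨hd.1, rows_bound N k d hd hvert, ?_⟩
  have hvT : ∀ d₁ d₂ : Vt N → Vt N → ℝ, ∀ l : ℝ,
      kLimited N k d₁ → kLimited N k d₂ → 0 < l → l < 1 →
      (∀ s t, dT N d s t = l * d₁ s t + (1 - l) * d₂ s t) → d₁ = d₂ := by
    intro e₁ e₂ l h1 h2 hl0 hl1 hdec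
    have hkey : ∀ s t, d s t = l * dT N e₁ s t + (1 - l) * dT N e₂ s t := by
      intro s t
      have := hdec (s + t) (-t)
      simpa [dT] using this
    have heq := hvert (dT N e₁) (dT N e₂) l (kLimited_dT N k e₁ h1)
      (kLimited_dT N k e₂ h2) hl0 hl1 hkey
    calc e₁ = dT N (dT N e₁) := (dT_invol N e₁).symm
    _ = dT N (dT N e₂) := by rw [heq]
    _ = e₂ := dT_invol N e₂
  have hb := rows_bound N k (dT N d) (kLimited_dT N k d hd) hvT
  have hseteq : {s : Vt N | ∃ t, t ≠ 0 ∧ dT N d s t ≠ 0} =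
      {s : Vt N | ∃ t, t ≠ 0 ∧ d (s - t) t ≠ 0} := by
    ext s
    constructor
    · rintro ⟨t, ht, h⟩
      exact ⟨-t, neg_ne_zero.2 ht, by simpa [dT, sub_neg_eq_add] using h⟩
    · rintro ⟨t, ht, h⟩
      refine ⟨-t, neg_ne_zero.2 ht, ?_⟩
      show dT N d s (-t) ≠ 0
      simpa [dT, sub_eq_add_neg] using h
  rwa [hseteq] at hb

end Aux

/-- Every vertex (extreme point) of the polytope `D_k` of `k`-limited traffic
matrices is a `k`-sparse traffic matrix. -/
theorem stmt6 (N : ℕ) [NeZero N] (k : ℕ) (d : Vt N → Vt N → ℝ)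
    (hd : kLimited N k d)
    (hvert : ∀ d₁ d₂ : Vt N → Vt N → ℝ, ∀ l : ℝ,
      kLimited N k d₁ → kLimited N k d₂ → 0 < l → l < 1 →
      (∀ s t, d s t = l * d₁ s t + (1 - l) * d₂ s t) → d₁ = d₂) :
    kSparse N k d := by
  exact stmt6' N k d hd hvert
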